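/- arXiv:1803.03158 — 5 statements merged into one kernel-verified Lean document; each statement's English description precedes it below -/
import Mathlib

section
/- The polynomials (kn+0)^k, (kn+1)^k, …, (kn+k-1)^k, regarded modulo constants (i.e., their vectors of coefficients of n^1,…,n^k), form a basis of ℚ^k for every k ≥ 1. -/
open Matrix

/-- The polynomials `(kn+0)^k, (kn+1)^k, …, (kn+k-1)^k`, regarded modulo constants
(i.e. via their vectors of coefficients of `n^1,…,n^k`, where the coefficient of
`nⁱ` in `(kn+j)^k` is `C(k,i)·kⁱ·j^{k-i}`), form a basis of `ℚ^k` for every `k ≥ 1`. -/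
theorem shifted_powers_basis (k : ℕ) (hk : 1 ≤ k) :
    LinearIndependent ℚ (fun j i : Fin k =>
        (k.choose ((i : ℕ) + 1) : ℚ) * (k : ℚ) ^ ((i : ℕ) + 1) *
          (j : ℚ) ^ (k - ((i : ℕ) + 1))) ∧
    Submodule.span ℚ (Set.range (fun j i : Fin k =>
        (k.choose ((i : ℕ) + 1) : ℚ) * (k : ℚ) ^ ((i : ℕ) + 1) *
          (j : ℚ) ^ (k - ((i : ℕ) + 1)))) = ⊤ := by
  set f : Fin k → Fin k → ℚ := fun j i =>
      (k.choose ((i : ℕ) + 1) : ℚ) * (k : ℚ) ^ ((i : ℕ) + 1) * (j : ℚ) ^ (k - ((i : ℕ) + 1))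
    with hf
  have hli : LinearIndependent ℚ f := by
    have hk0 : (k : ℚ) ≠ 0 := Nat.cast_ne_zero.mpr (by omega)
    set c : Fin k → ℚ := fun i => (k.choose ((i : ℕ) + 1) : ℚ) * (k : ℚ) ^ ((i : ℕ) + 1) with hc
    set V : Matrix (Fin k) (Fin k) ℚ :=
      (Matrix.vandermonde (fun j : Fin k => (j : ℚ))).submatrix id Fin.revPerm with hV
    have hAeq : Matrix.of f = Matrix.of (fun (j i : Fin k) => c i * V j i) := by
      ext j i
      simp only [Matrix.of_apply, Matrix.submatrix_apply, Matrix.vandermonde_apply,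
        Fin.revPerm_apply, id_eq]
      rfl
    have hdet : (Matrix.of f).det ≠ 0 := by
      rw [hAeq, Matrix.det_mul_row c V]
      apply mul_ne_zero
      · exact Finset.prod_ne_zero_iff.mpr fun i _ =>
          mul_ne_zero (Nat.cast_ne_zero.mpr (Nat.choose_pos i.isLt).ne')
            (pow_ne_zero _ hk0)
      · rw [hV, Matrix.det_permute']
        refine mul_ne_zero (by simp) ?_
        exact Matrix.det_vandermonde_ne_zero_iff.mpr fun a b h =>
          Fin.ext (Nat.cast_injective h)
    exact Matrix.linearIndependent_rows_iff_isUnit.mpr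
      ((Matrix.isUnit_iff_isUnit_det _).mpr (isUnit_iff_ne_zero.mpr hdet))
  refine ⟨hli, ?_⟩
  haveI : Nonempty (Fin k) := ⟨⟨0, by omega⟩⟩
  exact hli.span_eq_top_of_card_eq_finrank (by simp)
end

section
/- Comparing coefficients forces a power-mean contradiction: let k ≥ 3, ℓ ≥ 1, n₀ ∈ ℕ, and suppose there exist h ≥ 2, rationals c₀,…,c_{h-1} ≥ 0 with at least two cᵢ nonzero, and pairwise distinct rationals d₀,…,d_{h-1} ≥ 0 such that ∑ᵢ cᵢ/ℓ^k = 1, ∑ᵢ (cᵢ/ℓ^k) dᵢ = n₀/ℓ, and ∑ᵢ (cᵢ/ℓ^k) dᵢ^{k-1} = (n₀/ℓ)^{k-1}. Then we have a contradiction (no such data exist). -/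
/-- Comparing coefficients forces a power-mean contradiction: no data
`c₀,…,c_{h-1} ≥ 0` (at least two nonzero) and pairwise distinct `d₀,…,d_{h-1} ≥ 0`
can satisfy `∑ cᵢ/ℓ^k = 1`, `∑ (cᵢ/ℓ^k) dᵢ = n₀/ℓ` and
`∑ (cᵢ/ℓ^k) dᵢ^{k-1} = (n₀/ℓ)^{k-1}` when `k ≥ 3`. -/
theorem power_mean_contradiction (k ℓ n₀ h : ℕ) (hk : 3 ≤ k) (hℓ : 1 ≤ ℓ)
    (hh : 2 ≤ h) (c d : Fin h → ℚ)
    (hc : ∀ i, 0 ≤ c i) (hd : ∀ i, 0 ≤ d i)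
    (hdist : Function.Injective d)
    (htwo : ∃ i j, i ≠ j ∧ c i ≠ 0 ∧ c j ≠ 0)
    (h1 : ∑ i, c i / (ℓ : ℚ) ^ k = 1)
    (h2 : ∑ i, (c i / (ℓ : ℚ) ^ k) * d i = (n₀ : ℚ) / ℓ)
    (h3 : ∑ i, (c i / (ℓ : ℚ) ^ k) * d i ^ (k - 1) = ((n₀ : ℚ) / ℓ) ^ (k - 1)) :
    False := by
  classical
  set w : Fin h → ℝ := fun i => (c i : ℝ) / (ℓ : ℝ) ^ k with hw
  set p : Fin h → ℝ := fun i => (d i : ℝ) with hp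
  set t : Finset (Fin h) := Finset.univ.filter (fun i => c i ≠ 0) with ht
  have hℓ0 : (0 : ℝ) < (ℓ : ℝ) ^ k := by positivity
  have hwz : ∀ i ∈ Finset.univ \ t, w i = 0 := by
    intro i hi
    simp only [ht, Finset.mem_sdiff, Finset.mem_filter, Finset.mem_univ, true_and,
      not_not] at hi
    have : (c i : ℝ) = 0 := by exact_mod_cast hi
    simp [hw, this]
  have hsum : ∀ f : Fin h → ℝ, ∑ i ∈ t, w i * f i = ∑ i, w i * f i := by
    intro f
    refine Finset.sum_subset (Finset.subset_univ t) ?_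
    intro i _ hi
    have : w i = 0 := hwz i (by simp [Finset.mem_sdiff, hi])
    simp [this]
  have h1' : ∑ i ∈ t, w i = 1 := by
    have : ∑ i ∈ t, w i * 1 = ∑ i, w i * 1 := hsum 1
    simp only [mul_one] at this
    rw [this]
    have := congrArg (fun q : ℚ => (q : ℝ)) h1
    push_cast at this
    simpa [hw] using this
  have h2' : ∑ i ∈ t, w i * p i = (n₀ : ℝ) / ℓ := by
    rw [hsum]
    have := congrArg (fun q : ℚ => (q : ℝ)) h2
    push_cast at this
    simpa [hw, hp] using this
  have h3' : ∑ i ∈ t, w i * p i ^ (k - 1) = ((n₀ : ℝ) / ℓ) ^ (k - 1) := by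
    rw [hsum]
    have := congrArg (fun q : ℚ => (q : ℝ)) h3
    push_cast at this
    simpa [hw, hp] using this
  obtain ⟨i, j, hij, hci, hcj⟩ := htwo
  have hit : i ∈ t := by simp [ht, hci]
  have hjt : j ∈ t := by simp [ht, hcj]
  have hk2 : 2 ≤ k - 1 := by omega
  have hjensen := (strictConvexOn_pow hk2).map_sum_lt (t := t) (w := w) (p := p)
    (fun a _ => by
      have : c a ≠ 0 := by simpa [ht] using (Finset.mem_filter.mp ‹a ∈ t›).2
      have hca : (0 : ℝ) < (c a : ℝ) := by
        have := hc a
        rcases lt_or_eq_of_le this with h | h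
        · exact_mod_cast h
        · exact absurd h.symm ‹c a ≠ 0›
      exact div_pos hca hℓ0)
    h1' (fun a _ => by simp [hp, Set.mem_Ici]; exact_mod_cast hd a)
    ⟨i, hit, j, hjt, by
      simp only [hp, Ne, Rat.cast_inj]
      exact fun hdd => hij (hdist hdd)⟩
  simp only [smul_eq_mul] at hjensen
  rw [h2', h3'] at hjensen
  exact lt_irrefl _ hjensen
end

section
/- If a finite-state transducer A is predetermined by a finite word w, then for every infinite word w', if the output λ(q₀, w·w') is infinite then it is ultimately periodic. -/
/-- A sequential finite-state transducer with input alphabet `S`,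
output alphabet `G`, a finite set of states, an initial state,
a transition function and an output function. -/
structure FST (S G : Type) where
  Q : Type
  [fin : Fintype Q]
  init : Q
  tr : Q → S → Q
  out : Q → S → List G

namespace FST

variable {S G : Type}

/-- Extended transition function on finite words. -/
def trL (A : FST S G) : A.Q → List S → A.Q
  | q, [] => q
  | q, a :: u => A.trL (A.tr q a) u

/-- Extended output function on finite words. -/
def outL (A : FST S G) : A.Q → List S → List G
  | _, [] => []
  | q, a :: u => A.out q a ++ A.outL (A.tr q a) u

/-- Output produced from the initial state on the length-`m` prefix of the
infinite input word `w`. -/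
def outOn (A : FST S G) (w : ℕ → S) (m : ℕ) : List G :=
  A.outL A.init ((List.range m).map w)

/-- `A.Transduces w u` : running `A` on the infinite word `w` produces the
infinite word `u` (every letter of `u` eventually appears in the output of a
sufficiently long prefix of `w`). -/
def Transduces (A : FST S G) (w : ℕ → S) (u : ℕ → G) : Prop :=
  ∀ n : ℕ, ∃ m : ℕ, (A.outOn w m)[n]? = some (u n)

end FST

/-- An infinite word (or function) is ultimately periodic. -/
def UltimatelyPeriodic {α : Type} (u : ℕ → α) : Prop :=
  ∃ N q : ℕ, 1 ≤ q ∧ ∀ n, N ≤ n → u (n + q) = u n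

/-- Concatenation of a finite word with an infinite word. -/
def catStream {S : Type} (w : List S) (w' : ℕ → S) : ℕ → S :=
  fun n => if h : n < w.length then w.get ⟨n, h⟩ else w' (n - w.length)

/-- `A` is predetermined by the finite word `w`: there is a single infinite word
`u` such that the output on `w·w'` is a prefix of `u` for every finite `w'`. -/
def Predetermined {S G : Type} (A : FST S G) (w : List S) : Prop :=
  ∃ u : ℕ → G, ∀ w' : List S, ∀ i (h : i < (A.outL A.init (w ++ w')).length),
    (A.outL A.init (w ++ w')).get ⟨i, h⟩ = u i

namespace FSTAux

variable {S G : Type}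

lemma trL_append (A : FST S G) (q : A.Q) (x y : List S) :
    A.trL q (x ++ y) = A.trL (A.trL q x) y := by
  induction x generalizing q with
  | nil => simp [FST.trL]
  | cons a x ih => simp [FST.trL, ih]

lemma outL_append (A : FST S G) (q : A.Q) (x y : List S) :
    A.outL q (x ++ y) = A.outL q x ++ A.outL (A.trL q x) y := by
  induction x generalizing q with
  | nil => simp [FST.outL, FST.trL]
  | cons a x ih => simp [FST.outL, FST.trL, ih]

lemma map_range_catStream (w : List S) (w' : ℕ → S) (m : ℕ) (h : w.length ≤ m) :
    (List.range m).map (catStream w w') = w ++ (List.range (m - w.length)).map w' := by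
  obtain ⟨k, rfl⟩ := Nat.exists_eq_add_of_le h
  rw [List.range_add, List.map_append]
  congr 1
  · apply List.ext_get
    · simp
    · intro i h1 h2
      simp only [List.get_eq_getElem, List.getElem_map, List.getElem_range]
      simp only [List.length_map, List.length_range] at h1
      simp [catStream, h1]
  · rw [List.map_map]
    simp only [Nat.add_sub_cancel_left]
    apply List.map_congr_left
    intro i _
    simp [catStream, Function.comp]

lemma outL_cycle_pow (A : FST S G) (q : A.Q) (x : List S) (hq : A.trL q x = q) (k : ℕ) :
    A.trL q (List.flatten (List.replicate k x)) = q ∧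
    A.outL q (List.flatten (List.replicate k x)) = List.flatten (List.replicate k (A.outL q x)) := by
  induction k with
  | zero => simp [FST.trL, FST.outL]
  | succ k ih =>
      simp only [List.replicate_succ, List.flatten_cons]
      rw [trL_append, outL_append, hq, ih.1, ih.2]
      exact ⟨rfl, rfl⟩

end FSTAux

open FSTAux in
/-- If `A` is predetermined by `w`, then for every infinite word `w'`, if the
output on `w·w'` is infinite then it is ultimately periodic. -/
theorem predetermined_output_ultimately_periodic {S G : Type} (A : FST S G)
    (w : List S) (hpred : Predetermined A w) (w' : ℕ → S)
    (hinf : ∀ n : ℕ, ∃ m : ℕ, n < (A.outOn (catStream w w') m).length) :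
    ∃ u : ℕ → G, A.Transduces (catStream w w') u ∧ UltimatelyPeriodic u := by
  classical
  obtain ⟨u, hu⟩ := hpred
  set inp := catStream w w' with hinp
  -- get? version of predeterminedness
  have hget : ∀ v : List S, ∀ i, i < (A.outL A.init (w ++ v)).length →
      (A.outL A.init (w ++ v))[i]? = some (u i) := by
    intro v i hi
    have := hu v i hi
    simp only [List.get_eq_getElem] at this
    rw [List.getElem?_eq_getElem hi, this]
  refine ⟨u, ?_, ?_⟩
  · -- Transduces
    intro n
    obtain ⟨m, hm⟩ := hinf n
    refine ⟨max m w.length, ?_⟩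
    have hlen : w.length ≤ max m w.length := le_max_right _ _
    have hsplit : (List.range (max m w.length)).map inp =
        (List.range m).map inp ++
        ((List.range (max m w.length - m)).map (fun i => inp (m + i))) := by
      conv_lhs => rw [← Nat.add_sub_cancel' (le_max_left m w.length)]
      rw [List.range_add, List.map_append, List.map_map]
      rfl
    have hlt : n < (A.outOn inp (max m w.length)).length := by
      unfold FST.outOn at hm ⊢
      rw [hsplit, outL_append, List.length_append]
      exact lt_of_lt_of_le hm (Nat.le_add_right _ _)
    have := map_range_catStream w w' (max m w.length) hlen
    unfold FST.outOn at hlt ⊢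
    rw [← hinp] at this
    rw [this] at hlt ⊢
    exact hget _ n hlt
  · -- Ultimately periodic
    haveI : Fintype A.Q := A.fin
    -- state and output length after reading a prefix of length m
    set qAt : ℕ → A.Q := fun m => A.trL A.init ((List.range m).map inp) with hqAt
    obtain ⟨q, hqfib⟩ := Finite.exists_infinite_fiber qAt
    rw [Set.infinite_coe_iff] at hqfib
    -- pick m1 ≥ |w| with qAt m1 = q
    obtain ⟨m1, hm1fib, hm1ge⟩ := hqfib.exists_gt w.length
    have hm1ge : w.length ≤ m1 := le_of_lt hm1ge
    have hq1 : qAt m1 = q := hm1fib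
    -- find M with output length > length at m1
    obtain ⟨M, hM⟩ := hinf (A.outOn inp m1).length
    -- pick m2 > max m1 M with qAt m2 = q
    obtain ⟨m2, hm2fib, hm2gt⟩ := hqfib.exists_gt (max m1 M)
    have hq2 : qAt m2 = q := hm2fib
    have hm1m2 : m1 ≤ m2 := le_of_lt (lt_of_le_of_lt (le_max_left _ _) hm2gt)
    have hMm2 : M ≤ m2 := le_of_lt (lt_of_le_of_lt (le_max_right _ _) hm2gt)
    -- lengths monotone
    have hmono : ∀ a b : ℕ, a ≤ b →
        (List.range b).map inp = (List.range a).map inp ++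
          (List.range (b - a)).map (fun i => inp (a + i)) := by
      intro a b hab
      conv_lhs => rw [← Nat.add_sub_cancel' hab]
      rw [List.range_add, List.map_append, List.map_map]
      rfl
    set v1 : List S := (List.range (m1 - w.length)).map w' with hv1
    have hpre1 : (List.range m1).map inp = w ++ v1 := map_range_catStream w w' m1 hm1ge
    set x : List S := (List.range (m2 - m1)).map (fun i => inp (m1 + i)) with hx
    have hpre2 : (List.range m2).map inp = (List.range m1).map inp ++ x := hmono m1 m2 hm1m2
    set out1 : List G := A.outOn inp m1 with hout1
    set y : List G := A.outL q x with hy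
    -- cycle at q
    have hcyc : A.trL q x = q := by
      have h := trL_append A A.init ((List.range m1).map inp) x
      rw [← hpre2] at h
      have hq1' : A.trL A.init ((List.range m1).map inp) = q := hq1
      have hq2' : A.trL A.init ((List.range m2).map inp) = q := hq2
      rw [hq1'] at h
      rw [← h, hq2']
    -- out at m2 = out1 ++ y
    have hout2 : A.outOn inp m2 = out1 ++ y := by
      unfold FST.outOn
      rw [hpre2, outL_append]
      have hq1' : A.trL A.init ((List.range m1).map inp) = q := hq1
      rw [hq1', hout1, hy]
      rfl
    -- y nonempty
    have hylen : 1 ≤ y.length := by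
      rcases Nat.eq_zero_or_pos y.length with hl | hl
      · exfalso
        have h1 : (A.outOn inp m2).length = out1.length := by
          rw [hout2, List.length_append, hl]
          omega
        have h2 : (A.outOn inp M).length ≤ (A.outOn inp m2).length := by
          unfold FST.outOn
          rw [hmono M m2 hMm2, outL_append, List.length_append]
          exact Nat.le_add_right _ _
        omega
      · exact hl
    set p : ℕ := y.length with hp
    -- key: for every k, output on w ++ (v1 ++ x^k) = out1 ++ y^k
    have hkey : ∀ k : ℕ, A.outL A.init (w ++ (v1 ++ List.flatten (List.replicate k x))) =
        out1 ++ List.flatten (List.replicate k (A.outL q x)) := by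
      intro k
      rw [← List.append_assoc, outL_append, ← hpre1]
      have hqa : A.trL A.init ((List.range m1).map inp) = q := hq1
      rw [hqa, (outL_cycle_pow A q x hcyc k).2]
      rfl
    have hreplen : ∀ k : ℕ, (List.flatten (List.replicate k y)).length = k * p := by
      intro k
      rw [List.length_flatten]
      simp [hp, List.sum_replicate, Nat.smul_one_eq_cast]
    -- u (out1.length + j) = (y^k).get? j  for j < k * p
    have hA : ∀ k j : ℕ, j < k * p →
        some (u (out1.length + j)) = (List.flatten (List.replicate k y))[j]? := by
      intro k j hj
      have h1 := hget (v1 ++ List.flatten (List.replicate k x)) (out1.length + j)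
      rw [hkey k, ← hy] at h1
      have hlt : out1.length + j < (out1 ++ List.flatten (List.replicate k y)).length := by
        rw [List.length_append, hreplen k]
        omega
      have h2 := h1 hlt
      rw [List.getElem?_append_right (Nat.le_add_right _ _)] at h2
      simp only [Nat.add_sub_cancel_left] at h2
      exact h2.symm
    -- u ((out1.length + p) + j) = (y^k).get? j  for j < k * p
    have hB : ∀ k j : ℕ, j < k * p →
        some (u (out1.length + p + j)) = (List.flatten (List.replicate k y))[j]? := by
      intro k j hj
      have h1 := hget (v1 ++ List.flatten (List.replicate (k+1) x)) (out1.length + p + j)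
      rw [hkey (k+1), ← hy] at h1
      have hrep : List.flatten (List.replicate (k+1) y) = y ++ List.flatten (List.replicate k y) := by
        simp [List.replicate_succ]
      have hlt : out1.length + p + j < (out1 ++ List.flatten (List.replicate (k+1) y)).length := by
        rw [List.length_append, hreplen (k+1)]
        have : (k+1) * p = p + k * p := by ring
        omega
      have h2 := h1 hlt
      rw [hrep, ← List.append_assoc] at h2
      have hlen2 : (out1 ++ y).length = out1.length + p := by
        rw [List.length_append]
      rw [List.getElem?_append_right (by omega : (out1 ++ y).length ≤ out1.length + p + j)] at h2
      rw [hlen2] at h2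
      simp only [Nat.add_sub_cancel_left] at h2
      exact h2.symm
    refine ⟨out1.length, p, hylen, ?_⟩
    intro n hn
    set j : ℕ := n - out1.length with hj
    have hnj : n = out1.length + j := by omega
    have hjlt : j < (j + 1) * p := by
      calc j < j + 1 := Nat.lt_succ_self j
      _ ≤ (j + 1) * p := Nat.le_mul_of_pos_right _ hylen
    have h1 := hA (j+1) j hjlt
    have h2 := hB (j+1) j hjlt
    rw [hnj]
    have : out1.length + j + p = out1.length + p + j := by ring
    rw [this]
    exact Option.some_injective _ (h2.trans h1.symm)
end

section
/- Diagonalization against countably many words: let S ⊆ {0,1}^ℕ be a countable set of infinite binary words containing no ultimately periodic word. Then there exists an infinite binary word w that is not ultimately periodic such that no finite-state transduct of w lies in S. -/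
namespace FST
variable {S G : Type}

theorem trL_append (A : FST S G) (q : A.Q) (l1 l2 : List S) :
    A.trL q (l1 ++ l2) = A.trL (A.trL q l1) l2 := by
  induction l1 generalizing q with
  | nil => rfl
  | cons a t ih => rw [List.cons_append, trL, trL, ih]

theorem outL_append (A : FST S G) (q : A.Q) (l1 l2 : List S) :
    A.outL q (l1 ++ l2) = A.outL q l1 ++ A.outL (A.trL q l1) l2 := by
  induction l1 generalizing q with
  | nil => rfl
  | cons a t ih => rw [List.cons_append, outL, outL, trL, ih, List.append_assoc]

theorem outL_prefix (A : FST S G) (q : A.Q) {l1 l2 : List S} (h : l1 <+: l2) :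
    A.outL q l1 <+: A.outL q l2 := by
  obtain ⟨t, rfl⟩ := h
  rw [outL_append]
  exact List.prefix_append _ _
end FST

theorem flatten_replicate_get? (o : List Bool) (hP : 0 < o.length) :
    ∀ m t, t < m * o.length → ((List.replicate m o).flatten)[t]? = o[t % o.length]? := by
  intro m
  induction m with
  | zero => intro t ht; omega
  | succ m ih =>
    intro t ht
    rw [List.replicate_succ, List.flatten_cons]
    by_cases h : t < o.length
    · rw [List.getElem?_append_left h, Nat.mod_eq_of_lt h]
    · push_neg at h
      rw [List.getElem?_append_right h]
      have h2 : t - o.length < m * o.length := by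
        rw [Nat.succ_mul] at ht
        omega
      rw [ih _ h2]
      congr 1
      conv_rhs => rw [← Nat.sub_add_cancel h]
      rw [Nat.add_mod_right]

/-- `w` agrees with the finite prefix `p`. -/
def AgreesL (w : ℕ → Bool) (p : List Bool) : Prop :=
  ∀ i, i < p.length → p[i]? = some (w i)

theorem prefix_get? {p p' : List Bool} (h : p <+: p') {i : ℕ} (hi : i < p.length) :
    p'[i]? = p[i]? := by
  obtain ⟨t, rfl⟩ := h
  exact List.getElem?_append_left hi

theorem AgreesL.mono {w : ℕ → Bool} {p p' : List Bool} (h : p <+: p')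
    (hw : AgreesL w p') : AgreesL w p := by
  intro i hi
  rw [← prefix_get? h hi]
  exact hw i (hi.trans_le h.length_le)

theorem AgreesL.range_map_eq {w : ℕ → Bool} {p : List Bool} (hw : AgreesL w p) :
    (List.range p.length).map w = p := by
  apply List.ext_getElem?
  intro n
  rw [List.getElem?_map]
  by_cases h : n < p.length
  · rw [List.getElem?_range h, hw n h]
    rfl
  · push_neg at h
    rw [List.getElem?_eq_none h, List.getElem?_eq_none (by simpa using h)]
    rfl

theorem AgreesL.range_map_ge {w : ℕ → Bool} {p : List Bool} (hw : AgreesL w p)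
    {m : ℕ} (hm : p.length ≤ m) : ∃ e, (List.range m).map w = p ++ e := by
  refine ⟨(List.range (m - p.length)).map (fun i => w (p.length + i)), ?_⟩
  have : m = p.length + (m - p.length) := by omega
  rw [this, List.range_add, List.map_append, hw.range_map_eq, List.map_map]
  simp only [Nat.add_sub_cancel_left]
  rfl

theorem AgreesL.range_map_le {w : ℕ → Bool} {p : List Bool} (hw : AgreesL w p)
    {m : ℕ} (hm : m ≤ p.length) : (List.range m).map w <+: p := by
  have : (List.range m).map w = p.take m := by
    apply List.ext_getElem?
    intro n
    rw [List.getElem?_map]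
    by_cases h : n < m
    · rw [List.getElem?_range h]
      rw [List.getElem?_take, if_pos h,
        hw n (lt_of_lt_of_le h hm)]
      rfl
    · push_neg at h
      rw [List.getElem?_eq_none (by simpa using h), List.getElem?_eq_none (by simp; omega)]
      rfl
  rw [this]
  exact List.take_prefix m p

theorem bounded_outputs (A : FST Bool Bool) (u : ℕ → Bool) (hu : ¬ UltimatelyPeriodic u)
    (p : List Bool)
    (hA : ∀ e n b, (A.outL A.init (p ++ e))[n]? = some b → b = u n) :
    ∃ M, ∀ e, (A.outL A.init (p ++ e)).length ≤ M := by
  classical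
  letI := A.fin
  by_contra hcon
  push_neg at hcon
  set n := Fintype.card A.Q with hn
  set C := Finset.univ.sup (fun x : A.Q × Bool => (A.out x.1 x.2).length) with hCdef
  have hC : ∀ q a, (A.out q a).length ≤ C := fun q a =>
    Finset.le_sup (f := fun x : A.Q × Bool => (A.out x.1 x.2).length) (Finset.mem_univ (q, a))
  set q0 := A.trL A.init p with hq0
  set L0 := (A.outL A.init p).length with hL0
  obtain ⟨e, he⟩ := hcon (L0 + (n + 1) * C)
  have hsplit : ∀ l : List Bool, A.outL A.init (p ++ l) = A.outL A.init p ++ A.outL q0 l :=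
    fun l => by rw [A.outL_append, hq0]
  have hlenE : (n + 1) * C < (A.outL q0 e).length := by
    rw [hsplit, List.length_append] at he; omega
  -- monotonicity of output length along prefixes of e
  have gmono : ∀ k k', k ≤ k' → (A.outL q0 (e.take k)).length ≤ (A.outL q0 (e.take k')).length := by
    intro k k' hk
    have hpre : e.take k <+: e.take k' := by
      have h1 : e.take k = (e.take k').take k := by rw [List.take_take, min_eq_left hk]
      rw [h1]; exact List.take_prefix _ _
    exact (A.outL_prefix q0 hpre).length_le
  have gstep : ∀ k, k < e.length →
      (A.outL q0 (e.take (k + 1))).length ≤ (A.outL q0 (e.take k)).length + C := by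
    intro k hk
    have h1 : e.take (k + 1) = e.take k ++ [e.get ⟨k, hk⟩] := by
      rw [List.take_succ, List.getElem?_eq_getElem hk]; rfl
    rw [h1, A.outL_append, List.length_append]
    have : A.outL (A.trL q0 (e.take k)) [e.get ⟨k, hk⟩]
        = A.out (A.trL q0 (e.take k)) (e.get ⟨k, hk⟩) ++ [] := rfl
    rw [this, List.append_nil]
    exact Nat.add_le_add_left (hC _ _) _
  -- find a productive loop
  have main : ∃ i j, i < j ∧ j ≤ e.length ∧ A.trL q0 (e.take i) = A.trL q0 (e.take j) ∧
      (A.outL q0 (e.take i)).length < (A.outL q0 (e.take j)).length := by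
    have hex : ∀ a : Fin (n + 1), ∃ k, k ≤ e.length ∧ (a : ℕ) * C < (A.outL q0 (e.take k)).length := by
      intro a
      refine ⟨e.length, le_rfl, ?_⟩
      rw [List.take_length]
      have h1 : (a : ℕ) * C ≤ (n + 1) * C := Nat.mul_le_mul_right _ (le_of_lt a.isLt)
      omega
    let k : Fin (n + 1) → ℕ := fun a => Nat.find (hex a)
    have hkP : ∀ a, k a ≤ e.length ∧ (a : ℕ) * C < (A.outL q0 (e.take (k a))).length :=
      fun a => Nat.find_spec (hex a)
    have hk_pos : ∀ a, 1 ≤ k a := by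
      intro a
      rcases Nat.eq_zero_or_pos (k a) with h | h
      · exfalso
        have := (hkP a).2
        rw [h] at this
        simp only [List.take_zero] at this
        have hz : A.outL q0 ([] : List Bool) = [] := rfl
        rw [hz] at this
        simp at this
      · exact h
    have hk_le : ∀ a, (A.outL q0 (e.take (k a))).length ≤ (a : ℕ) * C + C := by
      intro a
      have hpos := hk_pos a
      have hkk : Nat.find (hex a) = k a := rfl
      have hmin : ¬ (k a - 1 ≤ e.length ∧ (a : ℕ) * C < (A.outL q0 (e.take (k a - 1))).length) :=
        Nat.find_min (hex a) (by omega)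
      push_neg at hmin
      have h2 : (A.outL q0 (e.take (k a - 1))).length ≤ (a : ℕ) * C :=
        hmin (by have := (hkP a).1; omega)
      have h3 := gstep (k a - 1) (by have := (hkP a).1; omega)
      rw [show k a - 1 + 1 = k a by omega] at h3
      omega
    obtain ⟨a, b, hab, hsab⟩ := Fintype.exists_ne_map_eq_of_card_lt
      (fun a : Fin (n + 1) => A.trL q0 (e.take (k a))) (by simp [hn])
    have key : ∀ a b : Fin (n + 1), a < b →
        A.trL q0 (e.take (k a)) = A.trL q0 (e.take (k b)) →
        ∃ i j, i < j ∧ j ≤ e.length ∧ A.trL q0 (e.take i) = A.trL q0 (e.take j) ∧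
          (A.outL q0 (e.take i)).length < (A.outL q0 (e.take j)).length := by
      intro a b hab' heq
      have hlt : (A.outL q0 (e.take (k a))).length < (A.outL q0 (e.take (k b))).length := by
        have h1 := hk_le a
        have h2 := (hkP b).2
        have h3 : ((a : ℕ) + 1) * C ≤ (b : ℕ) * C := Nat.mul_le_mul_right _ hab'
        rw [Nat.succ_mul] at h3
        omega
      have hij : k a < k b := by
        by_contra hc
        push_neg at hc
        exact absurd (gmono _ _ hc) (by omega)
      exact ⟨k a, k b, hij, (hkP b).1, heq, hlt⟩
    rcases hab.lt_or_gt with h | h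
    · exact key a b h hsab
    · exact key b a h hsab.symm
  obtain ⟨i, j, hij, hje, hseq, hglt⟩ := main
  set β := (e.take j).drop i with hβ
  have hαβ : e.take i ++ β = e.take j := by
    have h1 : (e.take j).take i = e.take i := by rw [List.take_take, min_eq_left hij.le]
    conv_rhs => rw [← List.take_append_drop i (e.take j)]
    rw [h1]
  set st := A.trL q0 (e.take i) with hst
  have hloop : A.trL st β = st := by
    have h1 := A.trL_append q0 (e.take i) β
    rw [hαβ] at h1
    rw [← hst, ← hseq] at h1
    exact h1.symm
  set o := A.outL st β with ho
  have hP : 0 < o.length := by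
    have h1 := A.outL_append q0 (e.take i) β
    rw [hαβ] at h1
    have h2 := congrArg List.length h1
    rw [List.length_append] at h2
    rw [← hst, ← ho] at h2
    omega
  have hiter : ∀ m, A.outL st ((List.replicate m β).flatten) = (List.replicate m o).flatten ∧
      A.trL st ((List.replicate m β).flatten) = st := by
    intro m
    induction m with
    | zero => exact ⟨rfl, rfl⟩
    | succ m ih =>
      rw [List.replicate_succ, List.flatten_cons, List.replicate_succ, List.flatten_cons]
      rw [A.outL_append, A.trL_append, hloop]
      exact ⟨by rw [ih.1, ho], by rw [ih.2]⟩
  set base := A.outL A.init (p ++ e.take i) with hbase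
  set L := base.length with hL
  have hperiod : ∀ t, L ≤ t → u (t + o.length) = u t := by
    intro t ht
    set m := t + o.length + 1 with hm
    have hmP : m ≤ m * o.length := Nat.le_mul_of_pos_right m hP
    have houtm : A.outL A.init (p ++ (e.take i ++ (List.replicate m β).flatten))
        = base ++ (List.replicate m o).flatten := by
      rw [← List.append_assoc, A.outL_append, hbase]
      congr 1
      have h1 : A.trL A.init (p ++ e.take i) = st := by
        rw [A.trL_append, ← hq0, hst]
      rw [h1, (hiter m).1]
    have hval : ∀ t', L ≤ t' → t' - L < m * o.length →
        some (u t') = o[(t' - L) % o.length]? := by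
      intro t' ht' hlt
      have hget : (A.outL A.init (p ++ (e.take i ++ (List.replicate m β).flatten)))[t']?
          = o[(t' - L) % o.length]? := by
        rw [houtm, List.getElem?_append_right ht', flatten_replicate_get? o hP m _ hlt]
      rcases h4 : o[(t' - L) % o.length]? with _ | c
      · exfalso
        rw [List.getElem?_eq_none_iff] at h4
        exact absurd h4 (by push_neg; exact Nat.mod_lt _ hP)
      · rw [h4] at hget
        rw [hA _ t' c hget]
    have h5 := hval (t + o.length) (by omega) (by omega)
    have h6 := hval t ht (by omega)
    rw [show t + o.length - L = (t - L) + o.length by omega, Nat.add_mod_right] at h5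
    rw [← h6] at h5
    exact Option.some.inj h5
  exact hu ⟨L, o.length, hP, hperiod⟩

theorem stage_fst (A : FST Bool Bool) (u : ℕ → Bool) (hu : ¬ UltimatelyPeriodic u)
    (p : List Bool) :
    ∃ p', p <+: p' ∧ ∀ w, AgreesL w p' → ¬ A.Transduces w u := by
  classical
  by_cases hA : ∃ e nn b, (A.outL A.init (p ++ e))[nn]? = some b ∧ b ≠ u nn
  · obtain ⟨e, nn, b, hb, hbne⟩ := hA
    refine ⟨p ++ e, List.prefix_append _ _, ?_⟩
    intro w hw hT
    obtain ⟨m, hm⟩ := hT nn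
    have hlt : nn < (A.outL A.init (p ++ e)).length := (List.getElem?_eq_some_iff.1 hb).fst
    have hcases : (A.outOn w m)[nn]? = some b ∨ (A.outOn w m)[nn]? = none := by
      unfold FST.outOn
      by_cases hm2 : (p ++ e).length ≤ m
      · obtain ⟨e2, he2⟩ := hw.range_map_ge hm2
        rw [he2, A.outL_append]
        exact Or.inl (by rw [List.getElem?_append_left hlt, hb])
      · push_neg at hm2
        have hpre := A.outL_prefix A.init (hw.range_map_le hm2.le)
        rcases h3 : (A.outL A.init ((List.range m).map w))[nn]? with _ | c
        · exact Or.inr rfl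
        · have h5 : nn < (A.outL A.init ((List.range m).map w)).length := (List.getElem?_eq_some_iff.1 h3).fst
          have h6 := prefix_get? hpre h5
          rw [hb, h3] at h6
          exact Or.inl (congrArg some (Option.some.inj h6).symm)
    rcases hcases with h | h <;> rw [hm] at h
    · exact hbne (Option.some.inj h).symm
    · exact nomatch h
  · push_neg at hA
    obtain ⟨M, hM⟩ := bounded_outputs A u hu p (fun e nn b hb => (hA e nn b hb))
    refine ⟨p, List.prefix_rfl, ?_⟩
    intro w hw hT
    obtain ⟨m, hm⟩ := hT M
    have hlen : (A.outOn w m).length ≤ M := by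
      unfold FST.outOn
      by_cases hm2 : p.length ≤ m
      · obtain ⟨e2, he2⟩ := hw.range_map_ge hm2
        rw [he2]
        exact hM e2
      · have h1 := (A.outL_prefix A.init (hw.range_map_le (le_of_not_ge hm2))).length_le
        have h2 := hM []
        rw [List.append_nil] at h2
        omega
    rw [List.getElem?_eq_none hlen] at hm
    exact nomatch hm

theorem stage_up (N q : ℕ) (hq : 1 ≤ q) (p : List Bool) :
    ∃ p', p <+: p' ∧ ∀ w, AgreesL w p' → ∃ n, N ≤ n ∧ w (n + q) ≠ w n := by
  set n := p.length + N with hn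
  refine ⟨(p ++ List.replicate (n + q - p.length) false) ++ [true],
    (List.prefix_append p _).trans (List.prefix_append _ _), ?_⟩
  intro w hw
  refine ⟨n, Nat.le_add_left N p.length, ?_⟩
  have len0 : (p ++ List.replicate (n + q - p.length) false).length = n + q := by
    simp; omega
  have len1 : ((p ++ List.replicate (n + q - p.length) false) ++ [true]).length = n + q + 1 := by
    simp; omega
  have hwn : w n = false := by
    have h := hw n (by omega)
    rw [List.getElem?_append_left (by omega), List.getElem?_append_right (by omega : p.length ≤ n)] at h
    rw [show (List.replicate (n + q - p.length) false)[n - p.length]? = some false by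
      simp [List.getElem?_replicate]; omega] at h
    exact (Option.some.inj h).symm
  have hwnq : w (n + q) = true := by
    have h := hw (n + q) (by omega)
    rw [List.getElem?_append_right (by omega : (p ++ List.replicate (n + q - p.length) false).length ≤ n + q)] at h
    rw [show n + q - (p ++ List.replicate (n + q - p.length) false).length = 0 by omega] at h
    exact (Option.some.inj h).symm
  rw [hwn, hwnq]
  simp

/-- Normalized transducers with states `Fin n`: a countable encoding. -/
def NFST := Σ n : ℕ, (Fin n → Bool → Fin n) × ((Fin n → Bool → List Bool) × Fin n)

instance : Countable NFST :=
  inferInstanceAs (Countable (Σ n : ℕ, (Fin n → Bool → Fin n) × ((Fin n → Bool → List Bool) × Fin n)))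

def NFST.toFST (B : NFST) : FST Bool Bool :=
  { Q := Fin B.1, init := B.2.2.2, tr := B.2.1, out := B.2.2.1 }

theorem exists_nfst (A : FST Bool Bool) :
    ∃ B : NFST, ∀ w u, B.toFST.Transduces w u ↔ A.Transduces w u := by
  classical
  letI := A.fin
  set e := Fintype.equivFin A.Q with he
  refine ⟨⟨Fintype.card A.Q, fun q a => e (A.tr (e.symm q) a),
    (fun q a => A.out (e.symm q) a, e A.init)⟩, ?_⟩
  set B : NFST := ⟨Fintype.card A.Q, fun q a => e (A.tr (e.symm q) a),
    (fun q a => A.out (e.symm q) a, e A.init)⟩ with hB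
  have key : ∀ (l : List Bool) (q : A.Q), B.toFST.outL (e q) l = A.outL q l := by
    intro l
    induction l with
    | nil => intro q; rfl
    | cons a t ih =>
      intro q
      show B.toFST.out (e q) a ++ B.toFST.outL (B.toFST.tr (e q) a) t
          = A.out q a ++ A.outL (A.tr q a) t
      have h1 : B.toFST.out (e q) a = A.out q a := by
        show A.out (e.symm (e q)) a = A.out q a
        rw [Equiv.symm_apply_apply]
      have h2 : B.toFST.tr (e q) a = e (A.tr q a) := by
        show e (A.tr (e.symm (e q)) a) = e (A.tr q a)
        rw [Equiv.symm_apply_apply]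
      rw [h1, h2, ih (A.tr q a)]
  have hout : ∀ w m, B.toFST.outOn w m = A.outOn w m := by
    intro w m
    show B.toFST.outL (e A.init) _ = A.outL A.init _
    exact key _ A.init
  intro w u
  constructor
  · intro h nn
    obtain ⟨m, hm⟩ := h nn
    exact ⟨m, by rw [← hout]; exact hm⟩
  · intro h nn
    obtain ⟨m, hm⟩ := h nn
    exact ⟨m, by rw [hout]; exact hm⟩

/-- Diagonalization against countably many words: for any countable set `Sset`
of infinite binary words containing no ultimately periodic word, there is an
infinite binary word `w`, not ultimately periodic, none of whose finite-state
transducts lies in `Sset`. -/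
theorem diagonalization_against_countable (Sset : Set (ℕ → Bool))
    (hcount : Sset.Countable)
    (hS : ∀ u ∈ Sset, ¬ UltimatelyPeriodic u) :
    ∃ w : ℕ → Bool, ¬ UltimatelyPeriodic w ∧
      ∀ u ∈ Sset, ∀ A : FST Bool Bool, ¬ A.Transduces w u := by
  classical
  set R : Set ((ℕ × ℕ) ⊕ ((ℕ → Bool) × NFST)) :=
    (Set.range Sum.inl) ∪ (Sum.inr '' (Sset ×ˢ (Set.univ : Set NFST))) with hR
  have hRc : R.Countable :=
    (Set.countable_range _).union ((hcount.prod Set.countable_univ).image _)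
  have hRne : R.Nonempty := ⟨Sum.inl (0, 0), Or.inl ⟨(0, 0), rfl⟩⟩
  obtain ⟨g, hg⟩ := hRc.exists_eq_range hRne
  have hstage : ∀ (k : ℕ) (p : List Bool), ∃ p',
      (p <+: p' ∧ p.length < p'.length) ∧
      (∀ N q, g k = Sum.inl (N, q) → 1 ≤ q →
        ∀ w, AgreesL w p' → ∃ n, N ≤ n ∧ w (n + q) ≠ w n) ∧
      (∀ v B, g k = Sum.inr (v, B) →
        ∀ w, AgreesL w p' → ¬ (NFST.toFST B).Transduces w v) := by
    intro k p
    have hgk : g k ∈ R := by rw [hg]; exact Set.mem_range_self k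
    rcases hgkform : g k with ⟨N, q⟩ | ⟨v, B⟩
    · by_cases hq : 1 ≤ q
      · obtain ⟨p', hp', hprop⟩ := stage_up N q hq p
        refine ⟨p' ++ [false], ⟨hp'.trans (List.prefix_append _ _),
          lt_of_le_of_lt hp'.length_le (by simp)⟩, ?_, ?_⟩
        · intro N' q' heq _ w hw
          obtain ⟨h1, h2⟩ : N = N' ∧ q = q' := by
            injection heq with h3; exact ⟨congrArg Prod.fst h3, congrArg Prod.snd h3⟩
          subst h1; subst h2
          exact hprop w (hw.mono (List.prefix_append _ _))
        · intro v B heq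
          exact absurd heq (by simp)
      · refine ⟨p ++ [false], ⟨List.prefix_append _ _, by simp⟩, ?_, ?_⟩
        · intro N' q' heq hq' w hw
          obtain ⟨h1, h2⟩ : N = N' ∧ q = q' := by
            injection heq with h3; exact ⟨congrArg Prod.fst h3, congrArg Prod.snd h3⟩
          exact absurd (h2 ▸ hq') hq
        · intro v B heq
          exact absurd heq (by simp)
    · have hv : v ∈ Sset := by
        rw [hgkform] at hgk
        rcases hgk with h | h
        · obtain ⟨x, hx⟩ := h
          exact absurd hx (by simp)
        · obtain ⟨⟨v', B'⟩, hmem, hx⟩ := h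
          have : v' = v := by injection hx with h3; exact congrArg Prod.fst h3
          exact this ▸ hmem.1
      obtain ⟨p', hp', hprop⟩ := stage_fst (NFST.toFST B) v (hS v hv) p
      refine ⟨p' ++ [false], ⟨hp'.trans (List.prefix_append _ _),
        lt_of_le_of_lt hp'.length_le (by simp)⟩, ?_, ?_⟩
      · intro N' q' heq
        exact absurd heq (by simp)
      · intro v' B' heq w hw
        obtain ⟨h1, h2⟩ : v = v' ∧ B = B' := by
          injection heq with h3; exact ⟨congrArg Prod.fst h3, congrArg Prod.snd h3⟩
        subst h1; subst h2
        exact hprop w (hw.mono (List.prefix_append _ _))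
  choose f hf1 hf2 hf3 using hstage
  set pch : ℕ → List Bool := fun k => Nat.rec [] (fun k ih => f k ih) k with hpch
  have hpchS : ∀ k, pch (k + 1) = f k (pch k) := fun k => rfl
  have hchain : ∀ k k', k ≤ k' → pch k <+: pch k' := by
    intro k k' h
    induction h with
    | refl => exact List.prefix_rfl
    | step h ih => exact ih.trans (by rw [hpchS]; exact (hf1 _ _).1)
  have hlen : ∀ k, k ≤ (pch k).length := by
    intro k
    induction k with
    | zero => exact Nat.zero_le _
    | succ k ih =>
      have := (hf1 k (pch k)).2
      rw [← hpchS] at this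
      omega
  set w : ℕ → Bool := fun nn => (pch (nn + 1)).getD nn false with hwdef
  have hagree : ∀ k, AgreesL w (pch k) := by
    intro k i hi
    have hiL : i < (pch (i + 1)).length := lt_of_lt_of_le (Nat.lt_succ_self i) (hlen (i + 1))
    have h1 : (pch k)[i]? = (pch (i + 1))[i]? := by
      rcases le_total k (i + 1) with h | h
      · exact (prefix_get? (hchain _ _ h) hi).symm
      · exact prefix_get? (hchain _ _ h) hiL
    rw [h1, List.getElem?_eq_getElem hiL]
    congr 1
    rw [hwdef]
    simp only
    rw [List.getD_eq_getElem?_getD, List.getElem?_eq_getElem hiL]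
    rfl
  refine ⟨w, ?_, ?_⟩
  · rintro ⟨N, q, hq, hper⟩
    have hmem : Sum.inl (N, q) ∈ R := Or.inl ⟨(N, q), rfl⟩
    rw [hg] at hmem
    obtain ⟨k, hk⟩ := Set.mem_range.1 hmem
    obtain ⟨nn, hnn, hne⟩ := hf2 k (pch k) N q hk hq w (by
      have := hagree (k + 1)
      rw [hpchS] at this
      exact this)
    exact hne (hper nn hnn)
  · intro u hu A hT
    obtain ⟨B, hB⟩ := exists_nfst A
    have hmem : Sum.inr (u, B) ∈ R := Or.inr ⟨(u, B), ⟨hu, Set.mem_univ _⟩, rfl⟩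
    rw [hg] at hmem
    obtain ⟨k, hk⟩ := Set.mem_range.1 hmem
    exact hf3 k (pch k) u B hk w (by
      have := hagree (k + 1)
      rw [hpchS] at this
      exact this) ((hB w u).2 hT)
end

section
/- For k ≥ 3, the identity n^k = ∑_{i=0}^{h-1} cᵢ (n + dᵢ)^k + b cannot hold for all n ∈ ℕ when the cᵢ ≥ 0 include at least two nonzero values and the dᵢ ≥ 0 are pairwise distinct rationals with b ∈ ℚ, unless it reduces to a single term: i.e., if p(n) = (n+n₀)^k equals b + ∑_{i<h} cᵢ(n+dᵢ)^k for all n with cᵢ ≥ 0, dᵢ distinct, then at most one cᵢ is nonzero. -/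
open Polynomial


/-- For `k ≥ 3`, if `(n+n₀)^k = b + ∑_{i<h} cᵢ(n+dᵢ)^k` holds for all `n ∈ ℕ`
with `cᵢ ≥ 0` and the `dᵢ` pairwise distinct and nonnegative, then at most one
`cᵢ` is nonzero. -/
theorem single_term_decomposition (k h : ℕ) (hk : 3 ≤ k)
    (n₀ b : ℚ) (hn₀ : 0 ≤ n₀) (c d : Fin h → ℚ)
    (hc : ∀ i, 0 ≤ c i) (hd : ∀ i, 0 ≤ d i) (hdist : Function.Injective d)
    (heq : ∀ n : ℕ, ((n : ℚ) + n₀) ^ k = b + ∑ i, c i * ((n : ℚ) + d i) ^ k) :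
    ∀ i j, c i ≠ 0 → c j ≠ 0 → i = j := by
  -- polynomial identity
  have hP : ((X + C n₀) ^ k : ℚ[X]) = C b + ∑ i, C (c i) * (X + C (d i)) ^ k := by
    apply eq_of_infinite_eval_eq
    apply Set.Infinite.mono (s := Set.range ((↑) : ℕ → ℚ))
    · rintro _ ⟨n, rfl⟩
      simp only [Set.mem_setOf_eq, eval_pow, eval_add, eval_X, eval_C, eval_finset_sum,
        eval_mul]
      exact heq n
    · exact Set.infinite_range_of_injective Nat.cast_injective
  have hcoeff : ∀ m : ℕ, n₀ ^ (k - m) * (k.choose m : ℚ) =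
      (C b : ℚ[X]).coeff m + ∑ i, c i * (d i ^ (k - m) * (k.choose m : ℚ)) := by
    intro m
    have := congrArg (fun p : ℚ[X] => p.coeff m) hP
    simpa [coeff_X_add_C_pow, Polynomial.finset_sum_coeff, coeff_C_mul] using this
  have hkpos : (0:ℚ) < k := by positivity
  have h1 : ∑ i, c i = 1 := by
    have := hcoeff k
    simp only [Nat.sub_self, pow_zero, one_mul, Nat.choose_self, Nat.cast_one, coeff_C,
      if_neg (by omega : ¬ k = 0), zero_add, mul_one] at this
    exact this.symm
  have h2 : ∑ i, c i * d i = n₀ := by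
    have := hcoeff (k - 1)
    have hk1 : k - (k-1) = 1 := by omega
    have hck : (k.choose (k-1) : ℚ) = k := by
      rw [Nat.choose_symm (by omega), Nat.choose_one_right]
    rw [coeff_C, if_neg (by omega), hk1, hck] at this
    simp only [pow_one] at this
    have h2' : (∑ i, c i * d i) * (k:ℚ) = n₀ * k := by
      rw [this, zero_add, Finset.sum_mul]
      exact Finset.sum_congr rfl fun i _ => by ring
    exact mul_right_cancel₀ hkpos.ne' h2'
  have h3 : ∑ i, c i * d i ^ (k-1) = n₀ ^ (k-1) := by
    have := hcoeff 1
    rw [coeff_C, if_neg (by omega), Nat.choose_one_right] at this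
    have h3' : (∑ i, c i * d i ^ (k-1)) * (k:ℚ) = n₀ ^ (k-1) * k := by
      rw [this, zero_add, Finset.sum_mul]
      exact Finset.sum_congr rfl fun i _ => by ring
    exact mul_right_cancel₀ hkpos.ne' h3'
  -- now Jensen over ℝ
  intro i j hi hj
  by_contra hij
  have hsc : StrictConvexOn ℝ (Set.Ici 0) fun x : ℝ => x ^ (k-1) :=
    strictConvexOn_pow (by omega)
  have key := (hsc.map_sum_eq_iff' (t := Finset.univ) (w := fun i => (c i : ℝ))
    (p := fun i => (d i : ℝ)) (fun i _ => Rat.cast_nonneg.mpr (hc i))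
    (by exact_mod_cast h1) (fun i _ => Set.mem_Ici.mpr (Rat.cast_nonneg.mpr (hd i)))).mp
  have hsum : (∑ t : Fin h, (c t : ℝ) • (d t : ℝ)) = (n₀ : ℝ) := by
    push_cast [smul_eq_mul]; exact_mod_cast h2
  have heqr : (fun x : ℝ => x ^ (k-1)) (∑ t : Fin h, (c t : ℝ) • (d t : ℝ))
      = ∑ t : Fin h, (c t : ℝ) • ((fun x : ℝ => x ^ (k-1)) (d t : ℝ)) := by
    rw [hsum]
    simp only [smul_eq_mul]
    exact_mod_cast h3.symm
  have key2 := key heqr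
  have hdi := key2 i (Finset.mem_univ i) (by exact_mod_cast hi)
  have hdj := key2 j (Finset.mem_univ j) (by exact_mod_cast hj)
  exact hij (hdist (by exact_mod_cast hdi.trans hdj.symm))
end
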